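/- arXiv:1812.07330 — 3 statements merged into one kernel-verified Lean document; each statement's English description precedes it below -/
import Mathlib

section
/- Let φ be the Thue–Morse morphism on {0,1}* defined by φ(0)=01, φ(1)=10. For all k ≥ 1 and all words u, v: if u ∼_k v then φ(u) ∼_{k+1} φ(v). -/
/-- Number of occurrences of the second word as a (scattered) subword of the first. -/
def binom {α : Type*} [DecidableEq α] : List α → List α → ℕ
  | _, [] => 1
  | [], _ :: _ => 0
  | a :: u, b :: v => binom u (b :: v) + if a = b then binom u v else 0

/-- k-binomial equivalence. -/
def BinEq (k : ℕ) (u v : List Bool) : Prop :=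
  ∀ x : List Bool, x.length ≤ k → binom u x = binom v x

/-- The Thue–Morse word: `tm n` is the parity of the number of ones
in the binary expansion of `n` (`false` plays the role of the letter 0). -/
def tm (n : ℕ) : Bool := (Nat.digits 2 n).count 1 % 2 == 1

/-- `u` occurs as a (contiguous) factor of the Thue–Morse word. -/
def isFactorTM (u : List Bool) : Prop :=
  ∃ i : ℕ, u = (List.range u.length).map (fun j => tm (i + j))

/-- The Thue–Morse morphism φ(0)=01, φ(1)=10, extended to words. -/
def phiW (w : List Bool) : List Bool :=
  w.flatMap (fun a => if a then [true, false] else [false, true])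

/-- Decoding: `delta x` lists (with multiplicity) the preimage patterns of `x` under φ:
each occurrence of `x` in `φ(u)` arises from a factorization of `x` into pieces of length
1 or 2 matched against blocks of `φ(u)`. -/
def delta : List Bool → List (List Bool)
  | [] => [[]]
  | [_] => [[false], [true]]
  | a :: b :: x =>
      (delta (b :: x)).map (List.cons false) ++ (delta (b :: x)).map (List.cons true) ++
        (if a ≠ b then (delta x).map (List.cons a) else [])

/-- All words of length `n` over `Bool`. -/
def allW : ℕ → List (List Bool)
  | 0 => [[]]
  | n + 1 => (allW n).map (List.cons false) ++ (allW n).map (List.cons true)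

lemma delta_len : ∀ x w, w ∈ delta x → x.length ≤ 2 * w.length ∧ w.length ≤ x.length := by
  intro x
  induction x using delta.induct with
  | case1 => intro w hw; simp [delta] at hw; simp [hw]
  | case2 a => intro w hw; simp [delta] at hw; rcases hw with h | h <;> simp [h]
  | case3 a b x ih1 ih2 =>
    intro w hw
    simp only [delta, List.mem_append, List.mem_map] at hw
    rcases hw with (⟨w', hw', rfl⟩ | ⟨w', hw', rfl⟩) | hw
    · have := ih1 w' hw'; simp at this ⊢; omega
    · have := ih1 w' hw'; simp at this ⊢; omega
    · by_cases hab : a ≠ b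
      · simp [hab] at hw
        obtain ⟨w', hw', rfl⟩ := hw
        have := ih2 w' hw'; simp at this ⊢; omega
      · simp [hab] at hw

lemma sum_map_cons (a c : Bool) (u : List Bool) (l : List (List Bool)) :
    ((l.map (List.cons c)).map (binom (a :: u))).sum
    = ((l.map (List.cons c)).map (binom u)).sum + (if a = c then (l.map (binom u)).sum else 0) := by
  induction l with
  | nil => simp
  | cons w l ih =>
    simp only [List.map_cons, List.sum_cons, ih, binom]
    split <;> ring

lemma key (u : List Bool) : ∀ x, binom (phiW u) x = ((delta x).map (binom u)).sum := by
  induction u with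
  | nil =>
    intro x
    cases x with
    | nil => simp [phiW, delta, binom]
    | cons e x' =>
      have h0 : ∀ w ∈ (delta (e :: x')).map (binom ([] : List Bool)), w = 0 := by
        intro n hn
        simp only [List.mem_map] at hn
        obtain ⟨w, hw, rfl⟩ := hn
        obtain ⟨h1, h2⟩ := delta_len _ _ hw
        cases w with
        | nil => simp at h1
        | cons b w' => simp [binom]
      rw [List.sum_eq_zero h0]
      simp [phiW, binom]
  | cons a u ih =>
    intro x
    have hphi : phiW (a :: u) = a :: (!a) :: phiW u := by cases a <;> simp [phiW]
    cases x with
    | nil => simp [delta, binom]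
    | cons e x' =>
      cases x' with
      | nil =>
        rw [hphi]
        cases a <;> cases e <;>
          simp [binom, delta, ih, List.map_cons, List.map_nil, List.sum_cons,
            List.sum_nil] <;>
          ring
      | cons f x'' =>
        rw [hphi]
        cases a <;> cases e <;> cases f <;>
          simp only [binom, delta, ih, sum_map_cons, List.map_append, List.sum_append,
            List.map_cons, List.map_nil, List.sum_cons, List.sum_nil,
            Bool.not_false, Bool.not_true, ne_eq, reduceIte, if_true, if_false,
            Bool.false_eq_true, Bool.true_eq_false, not_false_eq_true, not_true_eq_false] <;>
          ring

lemma delta_filter : ∀ x : List Bool,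
    (delta x).filter (fun w => w.length == x.length) = allW x.length := by
  intro x
  induction x using delta.induct with
  | case1 => simp [delta, allW]
  | case2 a => simp [delta, allW]
  | case3 a b x ih1 ih2 =>
    have h3 : ∀ l : List (List Bool), (∀ w ∈ l, w.length ≤ x.length) →
        (l.map (List.cons a)).filter (fun w => w.length == (a :: b :: x).length) = [] := by
      intro l hl
      rw [List.filter_eq_nil_iff]
      intro w hw
      simp only [List.mem_map] at hw
      obtain ⟨w', hw', rfl⟩ := hw
      have := hl w' hw'
      simp only [List.length_cons, beq_iff_eq]
      omega
    have hmapf : ∀ c : Bool, ((delta (b :: x)).map (List.cons c)).filter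
        (fun w => w.length == (a :: b :: x).length)
        = ((delta (b :: x)).filter (fun w => w.length == (b :: x).length)).map (List.cons c) := by
      intro c
      rw [List.filter_map]
      congr 1
      apply List.filter_congr
      intro w hw
      rw [Bool.eq_iff_iff]
      simp only [Function.comp_apply, List.length_cons, beq_iff_eq]
      omega
    show ((delta (b :: x)).map (List.cons false) ++ (delta (b :: x)).map (List.cons true) ++
        (if a ≠ b then (delta x).map (List.cons a) else [])).filter _ = _
    rw [List.filter_append, List.filter_append, hmapf, hmapf, ih1]
    by_cases hab : a ≠ b
    · rw [if_pos hab, h3 _ (fun w hw => (delta_len _ _ hw).2)]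
      simp [allW]
    · rw [if_neg hab]
      simp [allW]

lemma allW_sum (u : List Bool) : ∀ n, ((allW n).map (binom u)).sum = Nat.choose u.length n := by
  induction u with
  | nil =>
    intro n
    cases n with
    | zero => simp [allW, binom]
    | succ m =>
      have h0 : ∀ w ∈ (allW (m+1)).map (binom ([] : List Bool)), w = 0 := by
        intro t ht
        simp only [List.mem_map] at ht
        obtain ⟨w, hw, rfl⟩ := ht
        simp only [allW, List.mem_append, List.mem_map] at hw
        rcases hw with ⟨w', _, rfl⟩ | ⟨w', _, rfl⟩ <;> simp [binom]
      rw [List.sum_eq_zero h0]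
      simp
  | cons a u ih =>
    intro n
    cases n with
    | zero => simp [allW, binom]
    | succ m =>
      show (((allW m).map (List.cons false) ++ (allW m).map (List.cons true)).map
        (binom (a :: u))).sum = _
      rw [List.map_append, List.sum_append, sum_map_cons, sum_map_cons, ih]
      have hs : ((allW m).map (List.cons false)).map (binom u)
          ++ ((allW m).map (List.cons true)).map (binom u) = (allW (m+1)).map (binom u) := by
        simp [allW]
      have := ih (m + 1)
      rw [← hs, List.sum_append] at this
      cases a <;> simp [Nat.choose_succ_succ, Nat.succ_eq_add_one] at this ⊢ <;> omega

lemma sum_split (f : List Bool → ℕ) (p : List Bool → Bool) (l : List (List Bool)) :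
    (l.map f).sum
      = (l.map (fun w => if p w then 0 else f w)).sum + ((l.filter p).map f).sum := by
  induction l with
  | nil => simp
  | cons w l ih =>
    by_cases hp : p w <;> simp [hp, List.filter_cons, ih] <;> omega

lemma binom_len (u : List Bool) : binom u [false] + binom u [true] = u.length := by
  induction u with
  | nil => simp [binom]
  | cons a u ih => cases a <;> simp [binom] <;> omega

theorem binEq_phi (k : ℕ) (hk : 1 ≤ k) (u v : List Bool) (h : BinEq k u v) :
    BinEq (k + 1) (phiW u) (phiW v) := by
  have hlen : u.length = v.length := by
    have h0 := h [false] (by simpa using hk)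
    have h1 := h [true] (by simpa using hk)
    have hu := binom_len u
    have hv := binom_len v
    omega
  intro x hx
  rw [key u x, key v x,
    sum_split (binom u) (fun w => w.length == x.length) (delta x),
    sum_split (binom v) (fun w => w.length == x.length) (delta x),
    delta_filter, allW_sum, allW_sum, hlen]
  congr 1
  apply congrArg
  apply List.map_congr_left
  intro w hw
  by_cases hl : w.length = x.length
  · simp [hl]
  · have hle := (delta_len x w hw).2
    have : w.length ≤ k := by omega
    simp only [hl, beq_iff_eq, if_neg hl]
    exact h w this
end

section
/- Ochsenschläger's theorem (first part): let φ be the Thue–Morse morphism φ(0)=01, φ(1)=10. For all k ≥ 1, φ^k(0) ∼_k φ^k(1), i.e., binom(φ^k(0), x) = binom(φ^k(1), x) for all words x of length at most k. Consequently, if |u| = |v| then φ^k(u) ∼_k φ^k(v). -/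
lemma binom_nil_right {α : Type*} [DecidableEq α] (u : List α) : binom u [] = 1 := by
  cases u <;> rfl

lemma binom_append {α : Type*} [DecidableEq α] (u v x : List α) :
    binom (u ++ v) x =
      ∑ i ∈ Finset.range (x.length + 1), binom u (x.take i) * binom v (x.drop i) := by
  induction u generalizing x with
  | nil =>
    cases x with
    | nil => simp [binom]
    | cons b t =>
      rw [Finset.sum_range_succ']
      simp [binom, List.take_succ_cons]
  | cons a u ih =>
    cases x with
    | nil => simp [binom, binom_nil_right]
    | cons b t =>
      show binom (u ++ v) (b :: t) + (if a = b then binom (u ++ v) t else 0) = _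
      rw [ih (b :: t), ih t]
      simp only [List.length_cons]
      rw [Finset.sum_range_succ' (n := t.length + 1)]
      rw [Finset.sum_range_succ' (f := fun i => binom (a :: u) ((b :: t).take i) * binom v ((b :: t).drop i)) (n := t.length + 1)]
      simp only [List.take_succ_cons, List.drop_succ_cons, List.take_zero, List.drop_zero,
        binom, binom_nil_right, one_mul, add_mul, ite_mul, zero_mul, Finset.sum_add_distrib]
      by_cases h : a = b <;> simp [h] <;> ring

lemma binEq_refl (k : ℕ) (u : List Bool) : BinEq k u u := fun _ _ => rfl

lemma binEq_symm {k : ℕ} {u v : List Bool} (h : BinEq k u v) : BinEq k v u :=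
  fun x hx => (h x hx).symm

lemma binEq_append {k : ℕ} {u u' v v' : List Bool} (hu : BinEq k u u') (hv : BinEq k v v') :
    BinEq k (u ++ v) (u' ++ v') := by
  intro x hx
  rw [binom_append, binom_append]
  refine Finset.sum_congr rfl fun i hi => ?_
  rw [hu _ (le_trans (by simp [List.length_take]) hx),
      hv _ (le_trans (by simp) hx)]

lemma phiW_append (u v : List Bool) : phiW (u ++ v) = phiW u ++ phiW v := by
  simp [phiW]

lemma phiW_iter_append (n : ℕ) (u v : List Bool) :
    phiW^[n] (u ++ v) = phiW^[n] u ++ phiW^[n] v := by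
  induction n generalizing u v with
  | zero => simp
  | succ n ih => simp only [Function.iterate_succ_apply', ih, phiW_append]

lemma ochs_aux (k : ℕ) :
    BinEq (k + 1) (phiW^[k + 1] [false]) (phiW^[k + 1] [true]) := by
  induction k with
  | zero =>
    intro x hx
    match x, hx with
    | [], _ => rfl
    | [b], _ =>
      show binom (phiW [false]) [b] = binom (phiW [true]) [b]
      cases b <;> rfl
    | _ :: _ :: _, h => simp at h
  | succ k ih =>
    have hA : phiW^[k + 2] [false] = phiW^[k + 1] [false] ++ phiW^[k + 1] [true] := by
      rw [Function.iterate_succ_apply]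
      show phiW^[k + 1] ([false] ++ [true]) = _
      rw [phiW_iter_append]
    have hB : phiW^[k + 2] [true] = phiW^[k + 1] [true] ++ phiW^[k + 1] [false] := by
      rw [Function.iterate_succ_apply]
      show phiW^[k + 1] ([true] ++ [false]) = _
      rw [phiW_iter_append]
    rw [hA, hB]
    set A := phiW^[k + 1] [false] with hAdef
    set B := phiW^[k + 1] [true] with hBdef
    intro x hx
    rw [binom_append, binom_append]
    cases x with
    | nil => simp [binom_nil_right]
    | cons b t =>
      simp only [List.length_cons] at hx ⊢
      have ht : t.length ≤ k + 1 := by omega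
      rw [Finset.sum_range_succ' (n := t.length + 1),
          Finset.sum_range_succ' (f := fun i => binom B ((b :: t).take i) * binom A ((b :: t).drop i)) (n := t.length + 1),
          Finset.sum_range_succ, Finset.sum_range_succ]
      have hmid : ∀ i ∈ Finset.range t.length,
          binom A ((b :: t).take (i + 1)) * binom B ((b :: t).drop (i + 1)) =
          binom B ((b :: t).take (i + 1)) * binom A ((b :: t).drop (i + 1)) := by
        intro i hi
        simp only [Finset.mem_range] at hi
        rw [ih _ (by simp [List.length_take]; omega), ih _ (by simp; omega)]
      rw [Finset.sum_congr rfl hmid]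
      have htake : (b :: t).take (t.length + 1) = b :: t := by
        simpa using List.take_length (l := b :: t)
      have hdrop : (b :: t).drop (t.length + 1) = [] := by
        simpa using List.drop_length (l := b :: t)
      simp only [htake, hdrop, List.take_zero, List.drop_zero, binom_nil_right, one_mul, mul_one]
      omega

lemma binEq_letters (k : ℕ) (hk : 1 ≤ k) (a b : Bool) :
    BinEq k (phiW^[k] [a]) (phiW^[k] [b]) := by
  obtain ⟨k', rfl⟩ : ∃ k', k = k' + 1 := ⟨k - 1, by omega⟩
  cases a <;> cases b
  · exact binEq_refl _ _
  · exact ochs_aux k'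
  · exact binEq_symm (ochs_aux k')
  · exact binEq_refl _ _

theorem ochsenschlaeger_first (k : ℕ) (hk : 1 ≤ k) :
    BinEq k (phiW^[k] [false]) (phiW^[k] [true]) ∧
    ∀ u v : List Bool, u.length = v.length → BinEq k (phiW^[k] u) (phiW^[k] v) := by
  refine ⟨binEq_letters k hk false true, ?_⟩
  intro u
  induction u with
  | nil =>
    intro v hv
    rw [List.eq_nil_of_length_eq_zero hv.symm]
    exact binEq_refl _ _
  | cons a u ihu =>
    intro v hv
    cases v with
    | nil => simp at hv
    | cons b t =>
      have h1 : phiW^[k] (a :: u) = phiW^[k] [a] ++ phiW^[k] u := by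
        rw [show a :: u = [a] ++ u from rfl, phiW_iter_append]
      have h2 : phiW^[k] (b :: t) = phiW^[k] [b] ++ phiW^[k] t := by
        rw [show b :: t = [b] ++ t from rfl, phiW_iter_append]
      rw [h1, h2]
      exact binEq_append (binEq_letters k hk a b) (ihu t (by simpa using hv))
end

section
/- For all natural numbers m ∈ ℕ and letters a, b ∈ {0,1}, there exists a word z of length m over {0,1} such that a·z·b occurs as a factor of the Thue–Morse word. -/
lemma tm_two_mul (n : ℕ) : tm (2 * n) = tm n := by
  rcases n with _ | n
  · rfl
  · unfold tm
    rw [show 2 * (n+1) = (2*n+1) + 1 by ring, Nat.digits_add_two_add_one]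
    have h1 : (2*n+1+1) % 2 = 0 := by omega
    have h2 : (2*n+1+1) / 2 = n + 1 := by omega
    rw [h1, h2, List.count_cons]
    simp

lemma tm_two_mul_add_one (n : ℕ) : tm (2 * n + 1) = !tm n := by
  unfold tm
  rw [Nat.digits_add_two_add_one]
  have h1 : (2 * n + 1) % 2 = 1 := by omega
  have h2 : (2 * n + 1) / 2 = n := by omega
  rw [h1, h2, List.count_cons]
  simp
  cases h : (Nat.digits 2 n).count 1 % 2 == 1 <;> simp_all <;> omega

lemma tm0 : tm 0 = false := by simp [tm]
lemma tm1 : tm 1 = true := by rw [show (1:ℕ) = 2*0+1 by norm_num, tm_two_mul_add_one, tm0]; rfl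
lemma tm2 : tm 2 = true := by rw [show (2:ℕ) = 2*1 by norm_num, tm_two_mul, tm1]
lemma tm3 : tm 3 = false := by rw [show (3:ℕ) = 2*1+1 by norm_num, tm_two_mul_add_one, tm1]; rfl
lemma tm5 : tm 5 = false := by rw [show (5:ℕ) = 2*2+1 by norm_num, tm_two_mul_add_one, tm2]; rfl
lemma tm6 : tm 6 = false := by rw [show (6:ℕ) = 2*3 by norm_num, tm_two_mul, tm3]

/-- Every ordered pair of letters occurs in the Thue–Morse word at every positive distance. -/
lemma tm_pair : ∀ d, 1 ≤ d → ∀ a b : Bool, ∃ i, tm i = a ∧ tm (i + d) = b := by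
  intro d
  induction d using Nat.strong_induction_on with
  | _ d IH =>
  match d with
  | 0 => omega
  | 1 =>
    intro _ a b
    cases a <;> cases b
    · exact ⟨5, tm5, tm6⟩
    · exact ⟨0, tm0, tm1⟩
    · exact ⟨2, tm2, tm3⟩
    · exact ⟨1, tm1, tm2⟩
  | (e+2) =>
    intro _ a b
    rcases Nat.even_or_odd (e+2) with ⟨f, hf⟩ | ⟨f, hf⟩
    · obtain ⟨i, h1, h2⟩ := IH f (by omega) (by omega) a b
      exact ⟨2 * i, by rwa [tm_two_mul], by
        rw [hf, show 2*i + (f+f) = 2*(i+f) by ring, tm_two_mul]; exact h2⟩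
    · obtain ⟨j, h1, h2⟩ := IH (f+1) (by omega) (by omega) (!a) b
      refine ⟨2 * j + 1, ?_, ?_⟩
      · rw [tm_two_mul_add_one, h1, Bool.not_not]
      · rw [hf, show 2*j+1 + (2*f+1) = 2*(j+f+1) by ring, tm_two_mul]
        rw [show j + (f+1) = j + f + 1 by ring] at h2; exact h2

theorem letters_appear (m : ℕ) (a b : Bool) :
    ∃ z : List Bool, z.length = m ∧ isFactorTM (a :: (z ++ [b])) := by
  obtain ⟨i, ha, hb⟩ := tm_pair (m + 1) (by omega) a b
  refine ⟨(List.range m).map (fun j => tm (i + 1 + j)), by simp, i, ?_⟩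
  have hlen : (a :: ((List.range m).map (fun j => tm (i + 1 + j)) ++ [b])).length = m + 1 + 1 := by
    simp
  rw [hlen, List.range_succ, List.map_append, List.range_succ_eq_map, List.map_cons,
    List.map_map]
  simp only [List.map_cons, List.map_nil]
  rw [show i + 0 = i by ring, ha]
  rw [show i + (m + 1) = i + (m + 1) by ring] at hb
  rw [hb]
  have hmap : List.map (fun j => tm (i + 1 + j)) (List.range m) =
      List.map ((fun j => tm (i + j)) ∘ Nat.succ) (List.range m) := by
    apply List.map_congr_left
    intro j _
    simp only [Function.comp]
    congr 1
    omega
  rw [hmap]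
  rfl
end
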